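/- With γ_m = 4·16^{−m}·∑_{b=0}^{m−1} binom(2m−2,2b)·C_{m−1−b}·C_b and γ = ∑_{m=1}^∞ γ_m, for every integer M ≥ 2 one has ∑_{m=1}^{M} γ_m ≤ γ ≤ ∑_{m=1}^{M} γ_m + 1/(4(M−1)). -/

import Mathlib

/-- The `m`-th term `γ_m = 4·16^{−m}·∑_{b=0}^{m−1} C(2m−2, 2b)·C_{m−1−b}·C_b`
of the series defining the isolated-vertex constant `γ`. -/
noncomputable def gammaTerm (m : ℕ) : ℝ :=
  4 * ((16 : ℝ) ^ m)⁻¹ *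
    ∑ b ∈ Finset.range m,
      (Nat.choose (2 * m - 2) (2 * b) : ℝ) * (catalan (m - 1 - b) : ℝ) * (catalan b : ℝ)

section Aux
open Finset
set_option maxHeartbeats 1000000

-- binomial product identity
lemma key1 {n b : ℕ} (hb : b ≤ n) :
    (2*n).choose (2*b) * (2*b).choose b * (2*(n-b)).choose (n-b)
      = (2*n).choose n * (n.choose b)^2 := by
  have h1 := Nat.choose_mul_factorial_mul_factorial (show 2*b ≤ 2*n by omega)
  have h2 := Nat.choose_mul_factorial_mul_factorial (show b ≤ 2*b by omega)
  have h3 := Nat.choose_mul_factorial_mul_factorial (show (n-b) ≤ 2*(n-b) by omega)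
  have h4 := Nat.choose_mul_factorial_mul_factorial hb
  have h5 := Nat.choose_mul_factorial_mul_factorial (show n ≤ 2*n by omega)
  rw [show 2*n - 2*b = 2*(n-b) by omega] at h1
  rw [show 2*b - b = b by omega] at h2
  rw [show 2*(n-b) - (n-b) = n-b by omega] at h3
  rw [show 2*n - n = n by omega] at h5
  apply Nat.eq_of_mul_eq_mul_right
    (show 0 < (b.factorial * (n-b).factorial)^2 by positivity)
  calc (2*n).choose (2*b) * (2*b).choose b * (2*(n-b)).choose (n-b)
        * (b.factorial * (n-b).factorial)^2
      = (2*n).choose (2*b) * ((2*b).choose b * b.factorial * b.factorial)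
          * ((2*(n-b)).choose (n-b) * (n-b).factorial * (n-b).factorial) := by ring
    _ = (2*n).choose (2*b) * (2*b).factorial * (2*(n-b)).factorial := by rw [h2, h3]
    _ = (2*n).factorial := h1
    _ = (2*n).choose n * n.factorial * n.factorial := h5.symm
    _ = (2*n).choose n * (n.choose b * b.factorial * (n-b).factorial)
          * (n.choose b * b.factorial * (n-b).factorial) := by rw [h4]
    _ = (2*n).choose n * (n.choose b)^2 * (b.factorial * (n-b).factorial)^2 := by ring

lemma cat_rec (n : ℕ) : (n+2) * catalan (n+1) = 2*(2*n+1) * catalan n := by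
  have h1 := succ_mul_catalan_eq_centralBinom (n+1)
  have h2 := Nat.succ_mul_centralBinom_succ n
  have h3 := succ_mul_catalan_eq_centralBinom n
  have h1' : (n+2) * catalan (n+1) = Nat.centralBinom (n+1) := h1
  apply Nat.eq_of_mul_eq_mul_left (show 0 < n+1 by omega)
  calc (n+1) * ((n+2) * catalan (n+1)) = (n+1) * Nat.centralBinom (n+1) := by rw [h1']
    _ = 2*(2*n+1) * Nat.centralBinom n := h2
    _ = 2*(2*n+1) * ((n+1) * catalan n) := by rw [h3]
    _ = (n+1) * (2*(2*n+1) * catalan n) := by ring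

lemma cat_sq_bound (n : ℕ) : (catalan n)^2 * (n+1)^3 ≤ 16^n := by
  induction n with
  | zero => simp
  | succ n ih =>
    have hrec := cat_rec n
    refine Nat.le_of_mul_le_mul_right ?_ (show 0 < (n+1)^3 by positivity)
    calc (catalan (n+1))^2 * (n+2)^3 * (n+1)^3
        = ((n+2) * catalan (n+1))^2 * ((n+2) * (n+1)^3) := by ring
      _ = (2*(2*n+1) * catalan n)^2 * ((n+2) * (n+1)^3) := by rw [hrec]
      _ = (4*(2*n+1)^2*(n+2)) * ((catalan n)^2 * (n+1)^3) := by ring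
      _ ≤ (16*(n+1)^3) * 16^n := by
          exact Nat.mul_le_mul (by nlinarith) ih
      _ = 16^(n+1) * (n+1)^3 := by ring

lemma vander (n : ℕ) :
    ∑ b ∈ range (n+1), (n+1).choose (b+1) * (n+1).choose b = (2*n+2).choose (n+2) := by
  rw [show 2*n+2 = (n+1)+(n+1) by ring, Nat.add_choose_eq,
    Finset.Nat.sum_antidiagonal_eq_sum_range_succ_mk,
    Finset.sum_range_succ' (fun k => (n+1).choose (k, n+2-k).1 * (n+1).choose (k, n+2-k).2) (n+2),
    Finset.sum_range_succ (fun k => (n+1).choose (k+1, n+2-(k+1)).1 * (n+1).choose (k+1, n+2-(k+1)).2) (n+1)]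
  have h0 : (n+1).choose (n+2) = 0 := Nat.choose_eq_zero_of_lt (by omega)
  simp only [show n+2-(n+1+1) = 0 by omega, Nat.sub_zero, Nat.choose_zero_right, h0,
    zero_mul, mul_zero, mul_one, one_mul, add_zero, zero_add]
  apply Finset.sum_congr rfl
  intro i hi
  rw [show n+2-(i+1) = (n+1)-i by omega,
    Nat.choose_symm (by simp only [mem_range] at hi; omega)]

lemma two_mul_choose_eq (k : ℕ) : (2*k).choose k = (k+1) * catalan k := by
  rw [← Nat.centralBinom_eq_two_mul_choose, ← succ_mul_catalan_eq_centralBinom]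

lemma term_id {n b : ℕ} (hb : b ≤ n) :
    (2*n).choose (2*b) * catalan (n-b) * catalan b * (n+1)^2
      = (2*n).choose n * ((n+1).choose (b+1) * (n+1).choose b) := by
  have hk := key1 hb
  rw [two_mul_choose_eq b, two_mul_choose_eq (n-b)] at hk
  have hc1 : (n+1) * n.choose b = (n+1).choose (b+1) * (b+1) := Nat.add_one_mul_choose_eq n b
  have hc2 : (n+1) * n.choose b = (n+1).choose b * (n-b+1) := by
    have h := Nat.add_one_mul_choose_eq n (n-b)
    rw [Nat.choose_symm hb] at h
    rw [h, show n-b+1 = (n+1)-b by omega, Nat.choose_symm (show b ≤ n+1 by omega),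
      show (n+1)-b = n-b+1 by omega]
  apply Nat.eq_of_mul_eq_mul_right (show 0 < (b+1)*(n-b+1) by positivity)
  have hmul : ((n+1) * n.choose b) * ((n+1) * n.choose b)
      = ((n+1).choose (b+1) * (b+1)) * ((n+1).choose b * (n-b+1)) := by
    nth_rewrite 2 [hc2]
    rw [hc1]
  calc (2*n).choose (2*b) * catalan (n-b) * catalan b * (n+1)^2 * ((b+1)*(n-b+1))
      = ((2*n).choose (2*b) * ((b+1) * catalan b) * ((n-b+1) * catalan (n-b))) * (n+1)^2 := by
        ring
    _ = ((2*n).choose n * (n.choose b)^2) * (n+1)^2 := by rw [hk]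
    _ = (2*n).choose n * (((n+1) * n.choose b) * ((n+1) * n.choose b)) := by ring
    _ = (2*n).choose n * (((n+1).choose (b+1) * (b+1)) * ((n+1).choose b * (n-b+1))) := by
        rw [hmul]
    _ = (2*n).choose n * ((n+1).choose (b+1) * (n+1).choose b) * ((b+1)*(n-b+1)) := by ring

lemma sum_id (n : ℕ) :
    (∑ b ∈ range (n+1), (2*n).choose (2*b) * catalan (n-b) * catalan b) * (n+1)^2
      = (2*n).choose n * (2*n+2).choose (n+2) := by
  rw [Finset.sum_mul]
  calc ∑ b ∈ range (n+1), (2*n).choose (2*b) * catalan (n-b) * catalan b * (n+1)^2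
      = ∑ b ∈ range (n+1), (2*n).choose n * ((n+1).choose (b+1) * (n+1).choose b) :=
        Finset.sum_congr rfl fun b hb => term_id (Nat.lt_succ_iff.mp (mem_range.mp hb))
    _ = (2*n).choose n * ∑ b ∈ range (n+1), (n+1).choose (b+1) * (n+1).choose b := by
        rw [Finset.mul_sum]
    _ = _ := by rw [vander]

lemma nat_bound (n : ℕ) :
    n^2 * ∑ b ∈ range (n+1), (2*n).choose (2*b) * catalan (n-b) * catalan b ≤ 16^n := by
  set S := ∑ b ∈ range (n+1), (2*n).choose (2*b) * catalan (n-b) * catalan b with hS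
  have hid := sum_id n
  have ha : ((2*n).choose n)^2 * (n+1) ≤ 16^n := by
    rw [two_mul_choose_eq n]
    calc ((n+1) * catalan n)^2 * (n+1) = (catalan n)^2 * (n+1)^3 := by ring
      _ ≤ 16^n := cat_sq_bound n
  have hb' : ((2*n+2).choose (n+1))^2 * (n+2) ≤ 16^(n+1) := by
    rw [show 2*n+2 = 2*(n+1) by ring, two_mul_choose_eq (n+1)]
    calc ((n+1+1) * catalan (n+1))^2 * (n+2) = (catalan (n+1))^2 * (n+2)^3 := by ring
      _ ≤ 16^(n+1) := cat_sq_bound (n+1)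
  have hc : (2*n+2).choose (n+2) ≤ (2*n+2).choose (n+1) := by
    have h := Nat.choose_le_centralBinom (n+2) (n+1)
    rwa [Nat.centralBinom_eq_two_mul_choose, show 2*(n+1) = 2*n+2 by ring] at h
  have hB : ((2*n+2).choose (n+2))^2 * (n+2) ≤ 16^(n+1) :=
    le_trans (Nat.mul_le_mul_right _ (Nat.pow_le_pow_left hc 2)) hb'
  have key : (n^2*S)^2 * ((n+1)^5*(n+2)) ≤ (16^n)^2 * ((n+1)^5*(n+2)) := by
    calc (n^2*S)^2 * ((n+1)^5*(n+2))
        = n^4 * ((S*(n+1)^2)^2) * ((n+1)*(n+2)) := by ring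
      _ = n^4 * ((((2*n).choose n)^2 * (n+1)) * (((2*n+2).choose (n+2))^2 * (n+2))) := by
          rw [hid]; ring
      _ ≤ n^4 * (16^n * 16^(n+1)) := Nat.mul_le_mul_left _ (Nat.mul_le_mul ha hB)
      _ = 16*n^4 * (16^n)^2 := by ring
      _ ≤ ((n+1)^5*(n+2)) * (16^n)^2 := Nat.mul_le_mul_right _ (by
          have e : (n+1)^5*(n+2) = n^6+7*n^5+20*n^4+30*n^3+25*n^2+11*n+2 := by ring
          rw [e]
          linarith [Nat.zero_le (n^6), Nat.zero_le (n^5), Nat.zero_le (n^4), Nat.zero_le (n^3),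
            Nat.zero_le (n^2), Nat.zero_le n])
      _ = (16^n)^2 * ((n+1)^5*(n+2)) := by ring
  have h2 := Nat.le_of_mul_le_mul_right key (show 0 < (n+1)^5*(n+2) by positivity)
  exact (Nat.pow_le_pow_iff_left (by norm_num)).mp h2

lemma gammaTerm_zero : gammaTerm 0 = 0 := by
  simp [gammaTerm]

lemma gammaTerm_nonneg (m : ℕ) : 0 ≤ gammaTerm m := by
  unfold gammaTerm
  positivity

lemma gammaTerm_eq (n : ℕ) :
    gammaTerm (n+1) = 4 * ((16 : ℝ)^(n+1))⁻¹ *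
      ((∑ b ∈ range (n+1), (2*n).choose (2*b) * catalan (n-b) * catalan b : ℕ) : ℝ) := by
  unfold gammaTerm
  rw [show 2*(n+1)-2 = 2*n by omega]
  congr 1
  rw [Nat.cast_sum]
  apply Finset.sum_congr rfl
  intro b hb
  rw [show (n+1)-1-b = n-b by omega]
  push_cast
  ring

lemma gammaTerm_le (n : ℕ) : gammaTerm (n+2) ≤ 1/(4*((n:ℝ)+1)^2) := by
  have h := nat_bound (n+1)
  set S : ℕ := ∑ b ∈ range (n+1+1), (2*(n+1)).choose (2*b) * catalan (n+1-b) * catalan b with hSdef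
  have hcast : ((n:ℝ)+1)^2 * (S:ℝ) ≤ 16^(n+1) := by exact_mod_cast h
  have heq : gammaTerm (n+2) = 4*(S:ℝ)/16^(n+2) := by
    rw [show n+2 = (n+1)+1 from rfl, gammaTerm_eq (n+1)]
    ring
  rw [heq, div_le_div_iff₀ (by positivity) (by positivity)]
  have h16 : (16:ℝ)^(n+2) = 16*16^(n+1) := by rw [pow_succ]; ring
  nlinarith [hcast, sq_nonneg ((n:ℝ)+1)]

lemma summable_gammaTerm : Summable gammaTerm := by
  have h1 : Summable (fun n : ℕ => 1/((n:ℝ))^2) := by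
    exact Real.summable_one_div_nat_pow.mpr one_lt_two
  have h2 : Summable (fun n : ℕ => 1/(4*((n:ℝ)+1)^2)) := by
    have h3 := (summable_nat_add_iff 1).mpr h1
    have h4 := h3.mul_left (1/4 : ℝ)
    apply h4.congr
    intro n
    push_cast
    rw [one_div_mul_one_div]
  apply (summable_nat_add_iff 2).mp
  exact Summable.of_nonneg_of_le (fun n => gammaTerm_nonneg _) (fun n => gammaTerm_le n) h2


end Aux

section Main
open Finset
set_option maxHeartbeats 1000000 in
/-- with `γ = ∑_{m≥1} γ_m`, for every `M ≥ 2` one has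
`∑_{m=1}^{M} γ_m ≤ γ ≤ ∑_{m=1}^{M} γ_m + 1/(4(M−1))`. -/
theorem gamma_partial_sum_bounds (M : ℕ) (hM : 2 ≤ M) :
    ∑ m ∈ Finset.Icc 1 M, gammaTerm m ≤ (∑' m : ℕ, gammaTerm m) ∧
    (∑' m : ℕ, gammaTerm m) ≤ ∑ m ∈ Finset.Icc 1 M, gammaTerm m + 1 / (4 * ((M : ℝ) - 1)) := by
  have hS := summable_gammaTerm
  have hIcc : ∑ m ∈ range (M+1), gammaTerm m = ∑ m ∈ Finset.Icc 1 M, gammaTerm m := by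
    have hr : range (M+1) = insert 0 (Finset.Icc 1 M) := by
      ext x; simp only [Finset.mem_range, Finset.mem_insert, Finset.mem_Icc]; omega
    rw [hr, Finset.sum_insert (by simp), gammaTerm_zero, zero_add]
  have hdecomp := Summable.sum_add_tsum_nat_add (f := gammaTerm) (M+1) hS
  constructor
  · rw [← hIcc]
    exact Summable.sum_le_tsum (range (M+1)) (fun i _ => gammaTerm_nonneg i) hS
  · set F : ℕ → ℝ := fun i => 1/(4*((i:ℝ)+M-1)) with hF
    have htermb : ∀ i : ℕ, gammaTerm (i + (M+1)) ≤ F i - F (i+1) := by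
      intro i
      have he : i + (M+1) = (i+M-1)+2 := by omega
      rw [he]
      refine le_trans (gammaTerm_le (i+M-1)) ?_
      have hc : (((i+M-1 : ℕ) : ℝ)) = (i:ℝ)+M-1 := by
        rw [Nat.cast_sub (by omega : (1:ℕ) ≤ i+M)]
        push_cast
        ring
      rw [hc]
      have hM2 : (2:ℝ) ≤ (M:ℝ) := by exact_mod_cast hM
      have hi0 : (0:ℝ) ≤ (i:ℝ) := Nat.cast_nonneg i
      have hkey : F i - F (i+1) = 1/(4*(((i:ℝ)+M-1)*((i:ℝ)+M))) := by
        simp only [hF]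
        push_cast
        rw [div_sub_div _ _ (by nlinarith : (4:ℝ)*((i:ℝ)+M-1) ≠ 0)
          (by nlinarith : (4:ℝ)*((i:ℝ)+(1:ℝ)+M-1) ≠ 0)]
        rw [div_eq_div_iff (by nlinarith) (by nlinarith)]
        ring
      rw [hkey]
      apply one_div_le_one_div_of_le (by nlinarith)
      nlinarith
    have htail : (∑' i : ℕ, gammaTerm (i + (M+1))) ≤ 1/(4*((M:ℝ)-1)) := by
      apply Summable.tsum_le_of_sum_le ((summable_nat_add_iff (f := gammaTerm) (M+1)).mpr hS)
      intro s
      obtain ⟨N, hN⟩ := s.exists_nat_subset_range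
      have hM2 : (2:ℝ) ≤ (M:ℝ) := by exact_mod_cast hM
      calc ∑ i ∈ s, gammaTerm (i+(M+1))
          ≤ ∑ i ∈ range N, gammaTerm (i+(M+1)) :=
            Finset.sum_le_sum_of_subset_of_nonneg hN (fun i _ _ => gammaTerm_nonneg _)
        _ ≤ ∑ i ∈ range N, (F i - F (i+1)) := Finset.sum_le_sum (fun i _ => htermb i)
        _ = F 0 - F N := Finset.sum_range_sub' F N
        _ ≤ F 0 := by
            have h0 : (0:ℝ) ≤ F N := by
              simp only [hF]
              apply div_nonneg zero_le_one
              have : (0:ℝ) ≤ (N:ℝ) := Nat.cast_nonneg N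
              nlinarith
            linarith
        _ = 1/(4*((M:ℝ)-1)) := by simp only [hF]; norm_num
    rw [← hdecomp, hIcc]
    linarith

end Main
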